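/- Let d ≥ 2 and n ≥ 2, and let f be a unanimous, strongly group-strategyproof mechanism for n agents in ℝ^d. Then for every profile x = (x_1, …, x_n) such that the points x_1, …, x_n do not all lie on a common line, the output f(x) is deterministic, i.e., R(f(x)) = 0. -/

import Mathlib

open MeasureTheory ENNReal

noncomputable section

/-- Points in `d`-dimensional Euclidean space. -/
abbrev Pt (d : ℕ) : Type := EuclideanSpace ℝ (Fin d)

/-- A (randomized) mechanism: each profile is mapped to a Borel probability measure
with finite first moment. -/
def IsMechanism {d n : ℕ} (f : (Fin n → Pt d) → Measure (Pt d)) : Prop :=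
  ∀ x, IsProbabilityMeasure (f x) ∧ Integrable (fun y => y) (f x)

/-- Unanimity: if all agents report `z`, the output is the Dirac measure at `z`. -/
def Unanimous {d n : ℕ} (f : (Fin n → Pt d) → Measure (Pt d)) : Prop :=
  ∀ z : Pt d, f (fun _ => z) = Measure.dirac z

/-- Strong group-strategyproofness: no coalition can deviate so that no member is worse
off and at least one member is strictly better off. -/
def StrongGroupStrategyproof {d n : ℕ} (f : (Fin n → Pt d) → Measure (Pt d)) : Prop :=
  ∀ x x' : Fin n → Pt d, ∀ S : Finset (Fin n), S.Nonempty →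
    (∀ i ∉ S, x' i = x i) →
    ¬ ((∀ i ∈ S, ∫ y, ‖y - x i‖ ∂(f x') ≤ ∫ y, ‖y - x i‖ ∂(f x)) ∧
        ∃ i ∈ S, ∫ y, ‖y - x i‖ ∂(f x') < ∫ y, ‖y - x i‖ ∂(f x))

/-- The centroid of a distribution `P`: its vector-valued expectation. -/
def centroid {d : ℕ} (P : Measure (Pt d)) : Pt d := ∫ y, y ∂P

/-- The radius of a distribution `P`: the expected distance to its centroid. -/
def mradius {d : ℕ} (P : Measure (Pt d)) : ℝ := ∫ y, ‖y - centroid P‖ ∂P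

/-- For `d ≥ 2`, `n ≥ 2`, a unanimous, strongly group-strategyproof mechanism outputs a
deterministic location whenever the agents are not all collinear. -/
theorem strong_gsp_deterministic_off_line {d n : ℕ} (hd : 2 ≤ d) (hn : 2 ≤ n)
    (f : (Fin n → Pt d) → Measure (Pt d))
    (hmech : IsMechanism f)
    (huna : Unanimous f)
    (hsgsp : StrongGroupStrategyproof f) :
    ∀ x : Fin n → Pt d, ¬ Collinear ℝ (Set.range x) → mradius (f x) = 0 := by
  intro x hx
  obtain ⟨hP, hint⟩ := hmech x
  set P := f x with hPdef
  set c : Pt d := centroid P with hc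
  have hintsub : ∀ z : Pt d, Integrable (fun y => y - z) P :=
    fun z => hint.sub (integrable_const z)
  have hintn : ∀ z : Pt d, Integrable (fun y => ‖y - z‖) P := fun z => (hintsub z).norm
  have hcent : ∀ z : Pt d, ∫ y, y - z ∂P = c - z := by
    intro z
    rw [integral_sub hint (integrable_const z), integral_const]
    simp [hc, centroid]
  have hle : ∀ i, ‖c - x i‖ ≤ ∫ y, ‖y - x i‖ ∂P := by
    intro i
    have h := norm_integral_le_integral_norm (μ := P) (fun y => y - x i)
    rwa [hcent] at h
  -- equality via sgsp
  have key : ∀ i, ∫ y, ‖y - x i‖ ∂P = ‖c - x i‖ := by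
    by_contra h
    push_neg at h
    obtain ⟨i, hi⟩ := h
    refine hsgsp x (fun _ => c) Finset.univ ⟨i, Finset.mem_univ i⟩
      (fun j hj => absurd (Finset.mem_univ j) hj) ?_
    rw [huna c]
    constructor
    · intro j _
      rw [integral_dirac]
      exact hle j
    · refine ⟨i, Finset.mem_univ i, ?_⟩
      rw [integral_dirac]
      exact lt_of_le_of_ne (hle i) (Ne.symm hi)
  -- equality in Jensen forces the mass on a ray
  have ray : ∀ i, x i ≠ c → ∀ᵐ y ∂P, ∃ t : ℝ, y - c = t • (c - x i) := by
    intro i hne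
    set v : Pt d := c - x i with hv
    have hvne : v ≠ 0 := sub_ne_zero.mpr (Ne.symm hne)
    have hnv : ‖v‖ ≠ 0 := norm_ne_zero_iff.mpr hvne
    have hii : Integrable (fun y => (inner ℝ v (y - x i) : ℝ)) P :=
      (innerSL ℝ v).integrable_comp (hintsub (x i))
    have hiv : ∫ y, (inner ℝ v (y - x i) : ℝ) ∂P = ‖v‖ * ‖v‖ := by
      have h3 := (innerSL ℝ v).integral_comp_comm (hintsub (x i))
      rw [hcent (x i)] at h3
      simp only [innerSL_apply_apply] at h3
      rw [h3, ← hv, real_inner_self_eq_norm_mul_norm]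
    have hg0 : (fun y => ‖y - x i‖ * ‖v‖ - (inner ℝ v (y - x i) : ℝ)) =ᵐ[P] 0 := by
      rw [← integral_eq_zero_iff_of_nonneg_ae]
      · rw [integral_sub ((hintn (x i)).mul_const _) hii, integral_mul_const, key i, hiv,
          ← hv]
        ring
      · filter_upwards with y
        have := real_inner_le_norm v (y - x i)
        simp only [Pi.zero_apply, sub_nonneg]
        linarith [this]
      · exact ((hintn (x i)).mul_const _).sub hii
    filter_upwards [hg0] with y hy
    have heq : (inner ℝ v (y - x i) : ℝ) = ‖v‖ * ‖y - x i‖ := by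
      have h4 : ‖y - x i‖ * ‖v‖ - (inner ℝ v (y - x i) : ℝ) = 0 := hy
      linarith
    have hsmul : ‖y - x i‖ • v = ‖v‖ • (y - x i) := inner_eq_norm_mul_iff_real.mp heq
    set r : ℝ := ‖y - x i‖ with hr
    refine ⟨r / ‖v‖ - 1, ?_⟩
    have h1 : y - x i = (r / ‖v‖) • v := by
      calc y - x i = (‖v‖)⁻¹ • (‖v‖ • (y - x i)) := by rw [inv_smul_smul₀ hnv]
        _ = (‖v‖)⁻¹ • (r • v) := by rw [← hsmul]
        _ = (r / ‖v‖) • v := by rw [smul_smul, div_eq_inv_mul]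
    have h2 : y - c = (y - x i) - v := by rw [hv]; abel
    rw [h2, h1, sub_smul, one_smul]
  -- two independent directions exist
  obtain ⟨i, j, hij⟩ : ∃ i j, LinearIndependent ℝ ![c - x i, c - x j] := by
    by_contra h
    push_neg at h
    apply hx
    by_cases hall : ∀ i, x i = c
    · have : Set.range x ⊆ {c} := by rintro p ⟨i, rfl⟩; exact hall i
      exact (collinear_singleton ℝ c).subset this
    · push_neg at hall
      obtain ⟨i0, hi0⟩ := hall
      have ha : c - x i0 ≠ 0 := sub_ne_zero.mpr (Ne.symm hi0)
      rw [collinear_iff_of_mem (Set.mem_range_self i0)]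
      refine ⟨c - x i0, ?_⟩
      rintro p ⟨i, rfl⟩
      have hdep := h i0 i
      rw [LinearIndependent.pair_iff] at hdep
      push_neg at hdep
      obtain ⟨s, t, hst, hne⟩ := hdep
      have ht : t ≠ 0 := by
        rintro rfl
        have : s = 0 := by
          by_contra hs
          exact ha (by
            have := hst
            rw [zero_smul, add_zero] at this
            exact (smul_eq_zero.mp this).resolve_left hs)
        exact hne this rfl
      have hxi : c - x i = (-s / t) • (c - x i0) := by
        have : t • (c - x i) = -(s • (c - x i0)) := by
          rw [eq_neg_iff_add_eq_zero, add_comm]; exact hst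
        calc c - x i = t⁻¹ • (t • (c - x i)) := by rw [inv_smul_smul₀ ht]
          _ = t⁻¹ • (-(s • (c - x i0))) := by rw [this]
          _ = (-s / t) • (c - x i0) := by
              rw [smul_neg, smul_smul, ← neg_smul]
              congr 1
              field_simp
      refine ⟨1 - (-s / t), ?_⟩
      have : x i = c - ((-s / t) • (c - x i0)) := by rw [← hxi]; abel
      rw [this]
      simp only [vadd_eq_add, sub_smul, one_smul]
      abel
  -- conclude: a.e. y = c
  have hvi : x i ≠ c := by
    intro hcon
    have : c - x i = 0 := by rw [hcon]; abel
    rw [LinearIndependent.pair_iff] at hij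
    have := (hij 1 0 (by rw [this, smul_zero, zero_smul, add_zero])).1
    exact one_ne_zero this
  have hvj : x j ≠ c := by
    intro hcon
    have : c - x j = 0 := by rw [hcon]; abel
    rw [LinearIndependent.pair_iff] at hij
    have := (hij 0 1 (by rw [this, smul_zero, zero_smul, zero_add])).2
    exact one_ne_zero this
  have hae : ∀ᵐ y ∂P, ‖y - c‖ = 0 := by
    filter_upwards [ray i hvi, ray j hvj] with y ⟨t, hti⟩ ⟨s, hsj⟩
    rw [LinearIndependent.pair_iff] at hij
    have hzero : t • (c - x i) + (-s) • (c - x j) = 0 := by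
      rw [neg_smul, ← hti, ← hsj]; abel
    obtain ⟨ht0, -⟩ := hij t (-s) hzero
    rw [norm_eq_zero, hti, ht0, zero_smul]
  have : mradius P = ∫ y, ‖y - c‖ ∂P := rfl
  rw [this, integral_congr_ae hae, integral_zero]
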